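/- Let S be a nonempty set and let ∼ be an equivalence relation on S having at least two distinct equivalence classes. Then there exist no functions f₁, f₂ : S → ℝ such that for all z₁, z₂ ∈ S: f₁(z₁) + f₂(z₂) > 0 whenever z₁ ∼ z₂, and f₁(z₁) + f₂(z₂) < 0 whenever z₁ is not equivalent to z₂. -/
import Mathlib

/-- No component-wise additive function can classify (by sign) an equivalence
relation with at least two distinct equivalence classes. -/
theorem no_additive_equivalence_classifier
    {S : Type*} [Nonempty S] (r : S → S → Prop) (hr : Equivalence r)
    (htwo : ∃ a b : S, ¬ r a b) :
    ¬ ∃ (f₁ f₂ : S → ℝ), ∀ z₁ z₂ : S,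
        (r z₁ z₂ → f₁ z₁ + f₂ z₂ > 0) ∧ (¬ r z₁ z₂ → f₁ z₁ + f₂ z₂ < 0) := by
  rintro ⟨f₁, f₂, h⟩
  obtain ⟨a, b, hab⟩ := htwo
  have h1 := (h a a).1 (hr.refl a)
  have h2 := (h b b).1 (hr.refl b)
  have h3 := (h a b).2 hab
  have h4 := (h b a).2 (fun hba => hab (hr.symm hba))
  linarith
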